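/- If c ∈ (0, 1), L > 0, μ̃ > 0 with μ̃ ≤ L, then there exists α₀ > 0 such that for all α ∈ (0, α₀), the largest eigenvalue of the 2×2 symmetric matrix Q_α = [[1 - 2μ̃α + L²α², 2cLα], [2cLα, (1 + 2Lα + L²α²)c²]] is strictly less than 1. -/

import Mathlib

set_option maxHeartbeats 1000000

open Matrix

lemma eig_lt_one_of_posdef {Q : Matrix (Fin 2) (Fin 2) ℝ} (hQ : Q.IsHermitian)
    (h : (1 - Q).PosDef) (i : Fin 2) : hQ.eigenvalues i < 1 := by
  set v : EuclideanSpace ℝ (Fin 2) := hQ.eigenvectorBasis i with hv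
  have hvne : (v : Fin 2 → ℝ) ≠ 0 := by
    have := hQ.eigenvectorBasis.orthonormal.ne_zero i
    rw [← hv] at this
    intro hc
    exact this (by ext j; exact congrFun hc j)
  have hpos := h.dotProduct_mulVec_pos hvne
  have hmv : Q *ᵥ (v : Fin 2 → ℝ) = hQ.eigenvalues i • (v : Fin 2 → ℝ) :=
    hQ.mulVec_eigenvectorBasis i
  have hdot : 0 < dotProduct (v : Fin 2 → ℝ) (v : Fin 2 → ℝ) := by
    rcases Function.ne_iff.mp hvne with ⟨j, hj⟩
    have : (0:ℝ) < ∑ k, v k * v k := by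
      apply Finset.sum_pos' (fun k _ => mul_self_nonneg _)
      exact ⟨j, Finset.mem_univ j, mul_self_pos.mpr hj⟩
    simpa [dotProduct] using this
  rw [sub_mulVec, one_mulVec, hmv] at hpos
  have hsm : (v : Fin 2 → ℝ) ⬝ᵥ (hQ.eigenvalues i • (v : Fin 2 → ℝ))
      = hQ.eigenvalues i * ((v : Fin 2 → ℝ) ⬝ᵥ (v : Fin 2 → ℝ)) := by
    simp [dotProduct, Finset.mul_sum]; ring_nf
  rw [star_trivial, dotProduct_sub, hsm] at hpos
  nlinarith [hdot, hpos]

theorem small_step_size_eigenvalues_lt_one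
    (c L μ : ℝ) (hc0 : 0 < c) (hc1 : c < 1) (hL : 0 < L) (hμ : 0 < μ)
    (hμL : μ ≤ L) :
    ∃ α₀ > 0, ∀ α : ℝ, 0 < α → α < α₀ →
      ∀ (hQ : (Matrix.of
          ![![1 - 2 * μ * α + L ^ 2 * α ^ 2, 2 * c * L * α],
            ![2 * c * L * α, (1 + 2 * L * α + L ^ 2 * α ^ 2) * c ^ 2]] :
          Matrix (Fin 2) (Fin 2) ℝ).IsHermitian),
        ∀ i, hQ.eigenvalues i < 1 := by
  refine ⟨min (μ / L ^ 2) (min ((1 - c) / (2 * c * L)) (μ * (1 - c) / (8 * L ^ 2))), ?_, ?_⟩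
  · have h1 : 0 < μ / L ^ 2 := by positivity
    have h2 : 0 < (1 - c) / (2 * c * L) := by
      apply div_pos <;> nlinarith
    have h3 : 0 < μ * (1 - c) / (8 * L ^ 2) := by
      apply div_pos <;> nlinarith
    simp [h1, h2, h3]
  intro α hα hαlt hQ i
  have hα1 : α < μ / L ^ 2 := lt_of_lt_of_le hαlt (min_le_left _ _)
  have hα2 : α < (1 - c) / (2 * c * L) :=
    lt_of_lt_of_le hαlt (le_trans (min_le_right _ _) (min_le_left _ _))
  have hα3 : α < μ * (1 - c) / (8 * L ^ 2) :=
    lt_of_lt_of_le hαlt (le_trans (min_le_right _ _) (min_le_right _ _))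
  have hα1' : L ^ 2 * α < μ := by
    rw [lt_div_iff₀ (by positivity)] at hα1; nlinarith
  have hα2' : 2 * c * L * α < 1 - c := by
    rw [lt_div_iff₀ (by positivity)] at hα2; nlinarith
  have hα3' : 8 * L ^ 2 * α < μ * (1 - c) := by
    rw [lt_div_iff₀ (by positivity)] at hα3; nlinarith
  set a : ℝ := 2 * μ * α - L ^ 2 * α ^ 2 with ha_def
  set b : ℝ := 2 * c * L * α with hb_def
  set d : ℝ := 1 - (1 + 2 * L * α + L ^ 2 * α ^ 2) * c ^ 2 with hd_def
  have ha : μ * α < a := by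
    have : L ^ 2 * α ^ 2 < μ * α := by nlinarith
    nlinarith
  have hd : 3 * (1 - c) / 4 < d := by nlinarith [sq_nonneg (c * L * α), mul_pos hc0 (mul_pos hL hα)]
  have hdet : b ^ 2 < a * d := by
    have h1 : b ^ 2 < μ * (1 - c) * α / 2 := by
      have e1 : 8 * L ^ 2 * α * α < μ * (1 - c) * α := mul_lt_mul_of_pos_right hα3' hα
      have e2 : (0:ℝ) ≤ (1 - c ^ 2) * (L * α) ^ 2 := by
        have : (0:ℝ) ≤ 1 - c ^ 2 := by nlinarith
        exact mul_nonneg this (sq_nonneg _)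
      nlinarith [e1, e2]
    have h2 : μ * α * (3 * (1 - c) / 4) < a * d := by
      have hμα : 0 < μ * α := mul_pos hμ hα
      have hd0 : 0 < 3 * (1 - c) / 4 := by nlinarith
      calc μ * α * (3 * (1 - c) / 4) < a * (3 * (1 - c) / 4) := by nlinarith
        _ ≤ a * d := by nlinarith
    have h3 : μ * (1 - c) * α / 2 ≤ μ * α * (3 * (1 - c) / 4) := by
      nlinarith [mul_nonneg (mul_nonneg hμ.le hα.le) (by linarith : (0:ℝ) ≤ 1 - c)]
    exact h1.trans_le (h3.trans h2.le)
  have hpd : ((1 : Matrix (Fin 2) (Fin 2) ℝ) - (Matrix.of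
      ![![1 - 2 * μ * α + L ^ 2 * α ^ 2, 2 * c * L * α],
        ![2 * c * L * α, (1 + 2 * L * α + L ^ 2 * α ^ 2) * c ^ 2]])).PosDef := by
    refine Matrix.PosDef.of_dotProduct_mulVec_pos (Matrix.isHermitian_one.sub hQ) (fun ⦃x⦄ hx => ?_)
    have hx' : x 0 ≠ 0 ∨ x 1 ≠ 0 := by
      by_contra hcon
      push_neg at hcon
      exact hx (funext fun j => by fin_cases j <;> simp [hcon.1, hcon.2])
    have hexp : dotProduct (star x) (((1 : Matrix (Fin 2) (Fin 2) ℝ) - (Matrix.of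
        ![![1 - 2 * μ * α + L ^ 2 * α ^ 2, 2 * c * L * α],
          ![2 * c * L * α, (1 + 2 * L * α + L ^ 2 * α ^ 2) * c ^ 2]])) *ᵥ x)
        = a * x 0 ^ 2 - 2 * b * (x 0 * x 1) + d * x 1 ^ 2 := by
      rw [sub_mulVec, one_mulVec, star_trivial, dotProduct_sub]
      simp [dotProduct, mulVec, Fin.sum_univ_two, ha_def, hb_def, hd_def]
      ring
    rw [hexp]
    have ha0 : 0 < a := lt_trans (mul_pos hμ hα) ha
    rcases hx' with h | h
    · rcases eq_or_ne (x 1) 0 with h1 | h1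
      · rw [h1]
        have := mul_self_pos.mpr h
        nlinarith
      · nlinarith [sq_nonneg (a * x 0 - b * x 1), mul_self_pos.mpr h1]
    · nlinarith [sq_nonneg (a * x 0 - b * x 1), mul_self_pos.mpr h]
  exact eig_lt_one_of_posdef hQ hpd i
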